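/- arXiv:2111.11109 — 2 statements merged into one kernel-verified Lean document; each statement's English description precedes it below -/
import Mathlib

section
/- Assume B is Gorenstein. Then for every finitely generated B-module X that is free as an O-module: (a) the natural evaluation map X → X^◇◇ = Hom_B(Hom_B(X,B),B) is bijective; and (b) for every idempotent e of C, the map (Xe)^◇ → (X^◇)^e sending θ to the functional x ↦ θ((1⊗x)e) is a well-defined bijection, with inverse sending φ to the functional (1⊗x)e ↦ φ(x). -/
/-!
Statement 5.  Let `O` be a discrete valuation ring with fraction field `F`, let `B` be a
commutative `O`-algebra that is finitely generated and free as an `O`-module, and let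
`C := F ⊗_O B` (encoded as the localization of `B` at the image of the nonzero elements
of `O`).  `B` is Gorenstein if `Hom_O(B,O)` is a projective `B`-module, where `B` acts on
`Hom_O(B,O)` by `(b • θ) (x) = θ (b * x)`.

Assume `B` is Gorenstein.  Then for every finitely generated `B`-module `X` that is free as
an `O`-module:
(a) the natural evaluation map `X → X^◇◇ = Hom_B(Hom_B(X,B),B)` is bijective; and
(b) for every idempotent `e` of `C`, the map `(Xe)^◇ → (X^◇)^e` sending `θ` to the
functional `x ↦ θ ((1 ⊗ x) e)` is a well-defined bijection (here `Xe` is the `B`-submodule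
`{(1 ⊗ x) e : x ∈ X}` of `C ⊗_B X` and `X^e := {x : X | e • (1 ⊗ x) = 1 ⊗ x}`).
-/

set_option linter.unusedSectionVars false

noncomputable section

open TensorProduct

variable (O : Type) [CommRing O] [IsDomain O] [IsDiscreteValuationRing O]
variable (B : Type) [CommRing B] [Algebra O B] [Module.Finite O B] [Module.Free O B]
variable (C : Type) [CommRing C] [Algebra B C]
  [IsLocalization (Algebra.algebraMapSubmonoid B (nonZeroDivisors O)) C]

/-- The action of `B` on `Hom_O(B, O)` given by `(b • θ) (x) = θ (b * x)`. -/
instance dualSMul : SMul B (Module.Dual O B) :=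
  ⟨fun b θ => θ.comp (LinearMap.mul O B b)⟩

lemma dualSMul_apply (b : B) (θ : Module.Dual O B) (x : B) : (b • θ) x = θ (b * x) := rfl

/-- `Hom_O(B, O)` as a `B`-module, via `(b • θ) (x) = θ (b * x)`. -/
instance dualModule : Module B (Module.Dual O B) where
  one_smul θ := by ext x; simp [dualSMul_apply]
  mul_smul b c θ := by
    ext x; simp only [dualSMul_apply]; rw [mul_left_comm, ← mul_assoc]
  smul_zero b := by ext x; simp [dualSMul_apply]
  smul_add b θ₁ θ₂ := by ext x; simp [dualSMul_apply]
  add_smul b c θ := by ext x; simp [dualSMul_apply, add_mul]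
  zero_smul θ := by ext x; simp [dualSMul_apply]

/-- `B` is a Gorenstein `O`-order: the dual `Hom_O(B,O)` is projective over `B`. -/
def IsGorensteinOrder : Prop := Module.Projective B (Module.Dual O B)

variable (X : Type) [AddCommGroup X] [Module B X]

/-- The canonical map `X → C ⊗_B X`, `x ↦ 1 ⊗ x`. -/
def oneTensor : X →ₗ[B] C ⊗[B] X := TensorProduct.mk B C X 1

/-- The map `X → C ⊗_B X`, `x ↦ e • (1 ⊗ x) = (1 ⊗ x) e`. -/
def eTensor (e : C) : X →ₗ[B] C ⊗[B] X :=
  ((LinearMap.lsmul C (C ⊗[B] X) e).restrictScalars B).comp (oneTensor B C X)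

/-- `Xe := {(1 ⊗ x) e : x ∈ X} ⊆ C ⊗_B X`. -/
def eSub (e : C) : Submodule B (C ⊗[B] X) := LinearMap.range (eTensor B C X e)

/-- `X^e := {x : X | e • (1 ⊗ x) = 1 ⊗ x}`. -/
def supE (e : C) : Submodule B X := LinearMap.ker (eTensor B C X e - oneTensor B C X)

/-- The map `(Xe)^◇ → X^◇` given by `θ ↦ (x ↦ θ ((1 ⊗ x) e))`. -/
def dualMapE (e : C) : (↥(eSub B C X e) →ₗ[B] B) → (X →ₗ[B] B) :=
  fun θ => θ.comp (eTensor B C X e).rangeRestrict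

/-! ### Auxiliary material -/

section Aux

instance : IsScalarTower O B (Module.Dual O B) :=
  ⟨fun o b θ => by
    ext x
    show θ ((o • b) * x) = o • θ (b * x)
    rw [smul_mul_assoc, map_smul]⟩

lemma eTensor_apply (M : Type) [AddCommGroup M] [Module B M] (e : C) (m : M) :
    eTensor B C M e m = e • oneTensor B C M m := rfl

/-- Images of nonzero divisors of `O` are nonzero divisors of `B`. -/
lemma aux_s_nzd :
    Algebra.algebraMapSubmonoid B (nonZeroDivisors O) ≤ nonZeroDivisors B := by
  rintro t ⟨o, ho, rfl⟩
  refine mem_nonZeroDivisors_iff_right.mpr fun z hz => ?_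
  have h : o • z = 0 := by
    rw [Algebra.smul_def, mul_comm]
    exact hz
  rcases smul_eq_zero.mp h with h | h
  · exact absurd h (nonZeroDivisors.ne_zero ho)
  · exact h

/-- A generic torsion-freeness statement. -/
lemma aux_smul_cancel (M : Type) [AddCommGroup M] [Module O M] [Module B M]
    [IsScalarTower O B M] [NoZeroSMulDivisors O M]
    {t : B} (ht : t ∈ Algebra.algebraMapSubmonoid B (nonZeroDivisors O)) {m : M}
    (h : t • m = 0) : m = 0 := by
  obtain ⟨o, ho, rfl⟩ := ht
  rw [algebraMap_smul] at h
  rcases smul_eq_zero.mp h with h | h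
  · exact absurd h (nonZeroDivisors.ne_zero ho)
  · exact h

/-- `1 ⊗ m` vanishes iff `m` is torsion. -/
lemma aux_oneTensor_zero_iff (M : Type) [AddCommGroup M] [Module B M] (m : M) :
    oneTensor B C M m = 0 ↔
      ∃ t : Algebra.algebraMapSubmonoid B (nonZeroDivisors O), (t : B) • m = 0 := by
  haveI : IsLocalizedModule (Algebra.algebraMapSubmonoid B (nonZeroDivisors O))
      (TensorProduct.mk B C M 1) :=
    (isLocalizedModule_iff_isBaseChange (Algebra.algebraMapSubmonoid B (nonZeroDivisors O)) C
      (TensorProduct.mk B C M 1)).mpr (TensorProduct.isBaseChange B M C)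
  exact IsLocalizedModule.eq_zero_iff (Algebra.algebraMapSubmonoid B (nonZeroDivisors O))
    (TensorProduct.mk B C M 1)

lemma aux_unit_smul_cancel {R : Type} [CommRing R] {M : Type} [AddCommGroup M] [Module R M]
    {c : R} (hc : IsUnit c) {z z' : M} (h : c • z = c • z') : z = z' := by
  obtain ⟨u, rfl⟩ := hc
  have := congrArg (fun w => (↑u⁻¹ : R) • w) h
  simpa [smul_smul] using this

variable [Module O X] [IsScalarTower O B X]

/-- The adjunction map `Hom_O(X, O) → Hom_B(X, Hom_O(B, O))`. -/
def psiAux (g : X →ₗ[O] O) : X →ₗ[B] Module.Dual O B where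
  toFun x :=
    { toFun := fun b => g (b • x)
      map_add' := fun b b' => by simp [add_smul]
      map_smul' := fun o b => by simp [smul_assoc] }
  map_add' x y := by
    ext b
    show g (b • (x + y)) = g (b • x) + g (b • y)
    rw [smul_add, map_add]
  map_smul' b x := by
    ext b'
    show g (b' • b • x) = g ((b * b') • x)
    rw [← mul_smul, mul_comm]

lemma psiAux_apply (g : X →ₗ[O] O) (x : X) (b : B) : psiAux O B X g x b = g (b • x) := rfl

/-- Evaluation at `b` turns a `B`-linear map `X → Hom_O(B,O)` into an `O`-linear
functional on `X`. -/
def evalAtComp (b : B) (f : X →ₗ[B] Module.Dual O B) : X →ₗ[O] O where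
  toFun x := f x b
  map_add' x y := by simp
  map_smul' o x := by
    show f (o • x) b = o • f x b
    rw [← algebraMap_smul B o x, map_smul]
    show f x (algebraMap O B o * b) = o • f x b
    rw [Algebra.algebraMap_eq_smul_one, smul_mul_assoc, one_mul, map_smul]

lemma psi_evalAt (b : B) (f : X →ₗ[B] Module.Dual O B) :
    psiAux O B X (evalAtComp O B X b f) = b • f := by
  ext x b'
  show evalAtComp O B X b f (b' • x) = f x (b * b')
  show f (b' • x) b = f x (b * b')
  rw [map_smul]
  show f x (b' * b) = f x (b * b')
  rw [mul_comm]

lemma psi_smul (o : O) (g : X →ₗ[O] O) :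
    psiAux O B X (o • g) = algebraMap O B o • psiAux O B X g := by
  ext x b
  show o • g (b • x) = psiAux O B X g x (algebraMap O B o * b)
  rw [psiAux_apply, mul_smul, algebraMap_smul, map_smul g o (b • x)]

lemma psi_add (g g' : X →ₗ[O] O) :
    psiAux O B X (g + g') = psiAux O B X g + psiAux O B X g' := by
  ext x b
  rfl

end Aux

theorem gorenstein_duality
    (hGor : IsGorensteinOrder O B)
    [Module.Finite B X] [Module O X] [IsScalarTower O B X] [Module.Free O X]
    (e : C) (he : IsIdempotentElem e) :
    Function.Bijective (Module.Dual.eval B X) ∧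
      Function.Injective (dualMapE B C X e) ∧
        Set.range (dualMapE B C X e) = (supE B C (X →ₗ[B] B) e : Set (X →ₗ[B] B)) := by
  haveI : Module.Projective B (Module.Dual O B) := hGor
  haveI : Module.Finite O X := Module.Finite.trans B X
  haveI : Module.Finite B (Module.Dual O B) :=
    Module.Finite.of_restrictScalars_finite O B (Module.Dual O B)
  obtain ⟨n, p, hp⟩ := Module.Finite.exists_fin' B (Module.Dual O B)
  obtain ⟨i, hi⟩ := Module.projective_lifting_property p LinearMap.id hp
  have hpi : ∀ d, p (i d) = d := fun d => LinearMap.congr_fun hi d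
  -- ### Part (a)
  have ainj : Function.Injective (Module.Dual.eval B X) := by
    rw [injective_iff_map_eq_zero]
    intro x hx
    have hφ : ∀ φ : X →ₗ[B] B, φ x = 0 := fun φ => by
      simpa using LinearMap.congr_fun hx φ
    have hg : ∀ g : X →ₗ[O] O, g x = 0 := by
      intro g
      have h0 : i (psiAux O B X g x) = 0 := funext fun j =>
        hφ ((LinearMap.proj j).comp (i.comp (psiAux O B X g)))
      have hD : psiAux O B X g x = 0 := by
        have := congrArg p h0
        rwa [hpi, map_zero] at this
      have : psiAux O B X g x 1 = g x := by rw [psiAux_apply, one_smul]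
      rw [hD] at this
      exact this.symm.trans rfl
    have h0 : Module.Dual.eval O X x = 0 := LinearMap.ext fun g => by simpa using hg g
    exact (injective_iff_map_eq_zero _).mp (Module.bijective_dual_eval O X).injective x h0
  have asurj : Function.Surjective (Module.Dual.eval B X) := by
    intro Φ
    set Hfun : (X →ₗ[B] Module.Dual O B) → Module.Dual O B :=
      fun f => p (fun j => Φ ((LinearMap.proj j).comp (i.comp f))) with hHfun
    have Hsmul : ∀ (b : B) (f : X →ₗ[B] Module.Dual O B), Hfun (b • f) = b • Hfun f := by
      intro b f
      have hvec : (fun j => Φ ((LinearMap.proj j).comp (i.comp (b • f)))) =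
          b • (fun j => Φ ((LinearMap.proj j).comp (i.comp f))) := by
        funext j
        have hc : (LinearMap.proj j).comp (i.comp (b • f)) =
            b • ((LinearMap.proj (R := B) (φ := fun _ : Fin n => B) j).comp (i.comp f)) := by
          ext m
          show i ((b • f) m) j = b • (i (f m) j)
          rw [LinearMap.smul_apply, map_smul]
          rfl
        rw [hc, map_smul]
        rfl
      rw [hHfun]
      show p _ = b • p _
      rw [hvec, map_smul]
    have Hadd : ∀ (f f' : X →ₗ[B] Module.Dual O B), Hfun (f + f') = Hfun f + Hfun f' := by
      intro f f'
      have hvec : (fun j => Φ ((LinearMap.proj j).comp (i.comp (f + f')))) =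
          (fun j => Φ ((LinearMap.proj j).comp (i.comp f))) +
            (fun j => Φ ((LinearMap.proj j).comp (i.comp f'))) := by
        funext j
        have hc : (LinearMap.proj j).comp (i.comp (f + f')) =
            (LinearMap.proj (R := B) (φ := fun _ : Fin n => B) j).comp (i.comp f) +
              (LinearMap.proj (R := B) (φ := fun _ : Fin n => B) j).comp (i.comp f') := by
          ext m
          show i ((f + f') m) j = i (f m) j + i (f' m) j
          rw [LinearMap.add_apply, map_add]
          rfl
        rw [hc, map_add]
        rfl
      show p _ = p _ + p _
      rw [hvec, map_add]
    let hdual : Module.Dual O (Module.Dual O X) :=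
      { toFun := fun g => Hfun (psiAux O B X g) 1
        map_add' := fun g g' => by
          show Hfun (psiAux O B X (g + g')) 1 = _
          rw [psi_add, Hadd]
          rfl
        map_smul' := fun o g => by
          show Hfun (psiAux O B X (o • g)) 1 = o • Hfun (psiAux O B X g) 1
          rw [psi_smul, Hsmul]
          show Hfun (psiAux O B X g) (algebraMap O B o * 1) = _
          rw [mul_one, Algebra.algebraMap_eq_smul_one, map_smul] }
    obtain ⟨x, hx⟩ := (Module.bijective_dual_eval O X).surjective hdual
    have hx' : ∀ g : X →ₗ[O] O, Hfun (psiAux O B X g) 1 = g x := by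
      intro g
      have := LinearMap.congr_fun hx g
      exact this.symm
    have Hf_eq : ∀ f : X →ₗ[B] Module.Dual O B, Hfun f = f x := by
      intro f
      ext b
      have h2 : b • f = psiAux O B X (evalAtComp O B X b f) := (psi_evalAt O B X b f).symm
      calc Hfun f b = Hfun f (b * 1) := by rw [mul_one]
        _ = (b • Hfun f) 1 := rfl
        _ = Hfun (b • f) 1 := by rw [Hsmul]
        _ = Hfun (psiAux O B X (evalAtComp O B X b f)) 1 := by rw [← h2]
        _ = evalAtComp O B X b f x := hx' _
        _ = f x b := rfl
    refine ⟨x, ?_⟩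
    have hsurj : ∀ φ : X →ₗ[B] B, Φ φ = φ x := by
      intro φ
      have sep : ∀ d : Module.Dual O B, Φ φ • d = φ x • d := by
        intro d
        let fd : X →ₗ[B] Module.Dual O B :=
          { toFun := fun m => φ m • d
            map_add' := fun m m' => by
              show φ (m + m') • d = φ m • d + φ m' • d
              rw [map_add, add_smul]
            map_smul' := fun c m => by
              show φ (c • m) • d = c • (φ m • d)
              rw [map_smul, smul_eq_mul, mul_smul] }
        have h1 : Hfun fd = fd x := Hf_eq fd
        have h2 : Hfun fd = Φ φ • d := by
          have hc : ∀ j, (LinearMap.proj j).comp (i.comp fd) = (i d j) • φ := by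
            intro j
            ext m
            show i (fd m) j = (i d j) • φ m
            show i (φ m • d) j = (i d j) • φ m
            rw [map_smul, smul_eq_mul]
            show φ m * i d j = i d j * φ m
            rw [mul_comm]
          have hvec : (fun j => Φ ((LinearMap.proj j).comp (i.comp fd))) = Φ φ • i d := by
            funext j
            rw [hc j, map_smul, smul_eq_mul]
            show i d j * Φ φ = Φ φ * i d j
            rw [mul_comm]
          show p _ = Φ φ • d
          rw [hvec, map_smul, hpi]
        have h3 : fd x = φ x • d := rfl
        rw [← h2, h1, h3]
      have hθ : ∀ θ : Module.Dual O B, θ (Φ φ) = θ (φ x) := by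
        intro θ
        have h4 := congrArg (fun ψ : Module.Dual O B => ψ 1) (sep θ)
        simpa [dualSMul_apply, mul_one] using h4
      have h5 : Module.Dual.eval O B (Φ φ) = Module.Dual.eval O B (φ x) :=
        LinearMap.ext fun θ => by simpa using hθ θ
      exact (Module.bijective_dual_eval O B).injective h5
    exact LinearMap.ext fun φ => by simpa using (hsurj φ).symm
  -- ### Part (b)
  obtain ⟨⟨b, s⟩, hbs⟩ := IsLocalization.mk'_surjective
    (Algebra.algebraMapSubmonoid B (nonZeroDivisors O)) e
  have he2 : e * algebraMap B C (s : B) = algebraMap B C b := by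
    rw [← hbs]
    exact IsLocalization.mk'_spec C b s
  have hunit : IsUnit (algebraMap B C (s : B)) := IsLocalization.map_units C s
  haveI : NoZeroSMulDivisors O X :=
    ⟨fun {c x} h => Module.isTorsionFree_iff_smul_eq_zero.mp inferInstance c x h⟩
  haveI : NoZeroSMulDivisors O B :=
    ⟨fun {c x} h => Module.isTorsionFree_iff_smul_eq_zero.mp inferInstance c x h⟩
  have tfX : ∀ (t : Algebra.algebraMapSubmonoid B (nonZeroDivisors O)) (x : X),
      (t : B) • x = 0 → x = 0 := fun t x h => aux_smul_cancel O B X t.2 h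
  have tfB : ∀ (t : Algebra.algebraMapSubmonoid B (nonZeroDivisors O)) (c : B),
      (t : B) • c = 0 → c = 0 := fun t c h => aux_smul_cancel O B B t.2 h
  have tfD : ∀ (t : Algebra.algebraMapSubmonoid B (nonZeroDivisors O)) (f : X →ₗ[B] B),
      (t : B) • f = 0 → f = 0 := by
    intro t f h
    ext m
    have hm := LinearMap.congr_fun h m
    rw [LinearMap.smul_apply] at hm
    simpa using tfB t (f m) hm
  -- kernel description
  have hker : ∀ x : X, eTensor B C X e x = 0 ↔ b • x = 0 := by
    intro x
    constructor
    · intro h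
      have h2 : (algebraMap B C (s : B) * e) • oneTensor B C X x = 0 := by
        rw [mul_smul, ← eTensor_apply, h, smul_zero]
      rw [mul_comm, he2] at h2
      have h4 : oneTensor B C X (b • x) = 0 := by
        rw [map_smul, ← algebraMap_smul C b (oneTensor B C X x)]
        exact h2
      obtain ⟨t, ht⟩ := (aux_oneTensor_zero_iff O B C X (b • x)).mp h4
      exact tfX t (b • x) ht
    · intro h
      have h4 : oneTensor B C X (b • x) = 0 := by rw [h, map_zero]
      have h2 : (algebraMap B C b) • oneTensor B C X x = 0 := by
        rw [algebraMap_smul C b (oneTensor B C X x), ← map_smul]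
        exact h4
      rw [← he2, mul_comm, mul_smul] at h2
      have h5 : algebraMap B C (s : B) • (e • oneTensor B C X x) =
          algebraMap B C (s : B) • (0 : C ⊗[B] X) := by
        rw [smul_zero]
        exact h2
      have h6 := aux_unit_smul_cancel (M := C ⊗[B] X) hunit h5
      rw [eTensor_apply]
      exact h6
  -- supE description
  have hsup : ∀ f : X →ₗ[B] B, f ∈ supE B C (X →ₗ[B] B) e ↔ b • f = (s : B) • f := by
    intro f
    rw [supE, LinearMap.mem_ker, LinearMap.sub_apply, sub_eq_zero]
    constructor
    · intro h
      have h2 : algebraMap B C (s : B) • eTensor B C (X →ₗ[B] B) e f =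
          algebraMap B C (s : B) • oneTensor B C (X →ₗ[B] B) f := by rw [h]
      rw [eTensor_apply, ← mul_smul, mul_comm, he2,
        algebraMap_smul C b (oneTensor B C (X →ₗ[B] B) f),
        algebraMap_smul C (s : B) (oneTensor B C (X →ₗ[B] B) f),
        ← map_smul, ← map_smul] at h2
      have h4 : oneTensor B C (X →ₗ[B] B) (b • f - (s : B) • f) = 0 := by
        rw [map_sub, h2, sub_self]
      obtain ⟨t, ht⟩ := (aux_oneTensor_zero_iff O B C (X →ₗ[B] B) _).mp h4
      have h5 := tfD t _ ht
      exact sub_eq_zero.mp h5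
    · intro h
      have h2 : oneTensor B C (X →ₗ[B] B) (b • f) = oneTensor B C (X →ₗ[B] B) ((s : B) • f) := by
        rw [h]
      rw [map_smul, map_smul, ← algebraMap_smul C b (oneTensor B C (X →ₗ[B] B) f),
        ← algebraMap_smul C (s : B) (oneTensor B C (X →ₗ[B] B) f), ← he2, mul_comm, mul_smul]
        at h2
      have h6 := aux_unit_smul_cancel hunit h2
      rw [eTensor_apply]
      exact h6
  -- idempotency gives b * b = b * s
  have hbb : b * b = b * (s : B) := by
    have h2 : algebraMap B C (b * b) = algebraMap B C (b * (s : B)) := by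
      rw [map_mul, map_mul, ← he2]
      have : e * algebraMap B C (s : B) * (e * algebraMap B C (s : B)) =
          e * e * (algebraMap B C (s : B) * algebraMap B C (s : B)) := by ring
      rw [this, he]
      ring
    exact IsLocalization.injective C (aux_s_nzd O B) h2
  -- range description
  have hrange : ∀ f : X →ₗ[B] B,
      f ∈ Set.range (dualMapE B C X e) ↔ ∀ x : X, eTensor B C X e x = 0 → f x = 0 := by
    intro f
    constructor
    · rintro ⟨θ, rfl⟩ x hx
      show θ ((eTensor B C X e).rangeRestrict x) = 0
      have h0 : (eTensor B C X e).rangeRestrict x = 0 := Subtype.ext (by simpa using hx)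
      rw [h0]
      exact map_zero θ
    · intro hf
      have hK : LinearMap.ker (eTensor B C X e) ≤ LinearMap.ker f := fun x hx => hf x hx
      refine ⟨(Submodule.liftQ _ f hK).comp
        (LinearMap.quotKerEquivRange (eTensor B C X e)).symm.toLinearMap, ?_⟩
      ext x
      show (Submodule.liftQ _ f hK)
        ((LinearMap.quotKerEquivRange (eTensor B C X e)).symm
          ((eTensor B C X e).rangeRestrict x)) = f x
      have h1 : (LinearMap.quotKerEquivRange (eTensor B C X e)).symm
          ((eTensor B C X e).rangeRestrict x) = Submodule.Quotient.mk x := by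
        rw [LinearEquiv.symm_apply_eq]
        exact Subtype.ext (by simp)
      rw [h1, Submodule.liftQ_apply]
  -- injectivity of dualMapE
  have hinj : Function.Injective (dualMapE B C X e) := by
    intro θ₁ θ₂ h
    ext y
    obtain ⟨x, hxy⟩ := y.2
    have hy : (eTensor B C X e).rangeRestrict x = y := Subtype.ext (by simpa using hxy)
    have h2 : θ₁ ((eTensor B C X e).rangeRestrict x) = θ₂ ((eTensor B C X e).rangeRestrict x) :=
      LinearMap.congr_fun h x
    rwa [hy] at h2
  refine ⟨⟨ainj, asurj⟩, hinj, ?_⟩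
  ext f
  rw [SetLike.mem_coe, hrange f, hsup f]
  constructor
  · intro hf
    ext m
    have hz : b • ((b - (s : B)) • m) = 0 := by
      rw [← mul_smul, mul_sub, hbb, sub_self, zero_smul]
    have h1 : f ((b - (s : B)) • m) = 0 := hf _ ((hker _).mpr hz)
    rw [map_smul, sub_smul] at h1
    have h2 : b • f m = (s : B) • f m := by
      have := sub_eq_zero.mp h1
      exact this
    simpa using h2
  · intro hf x hx
    have hbx : b • x = 0 := (hker x).mp hx
    have h1 : b • f x = 0 := by rw [← map_smul, hbx, map_zero]
    have h2 := LinearMap.congr_fun hf x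
    rw [LinearMap.smul_apply, LinearMap.smul_apply] at h2
    exact tfB s (f x) (h2.symm.trans h1)

end
end

section
/- Let ρ : M → N be a homomorphism of finitely generated 𝒜-modules, let r ≥ 0, and suppose there exist elements f_1, …, f_r of M such that the images 1⊗ρ(f_1), …, 1⊗ρ(f_r) in ℚ ⊗_ℤ N are linearly independent over A (i.e. they form an A-basis of a free A-submodule of rank r). Then for every r-tuple φ_1, …, φ_r of elements of M and every positive integer n, there exist elements φ'_1, …, φ'_r of M such that (a) φ'_i − φ_i ∈ n·M for all i, and (b) the 𝒜-submodule of N generated by ρ(φ'_1), …, ρ(φ'_r) is a free 𝒜-module of rank r. -/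
/-!
Statement 7.  Let `A` be a finite-dimensional semisimple `ℚ`-algebra and `𝒜` a `ℤ`-order
in `A` (a subring that is finitely generated as a `ℤ`-module and spans `A` over `ℚ`).
Let `ρ : M → N` be a homomorphism of finitely generated `𝒜`-modules, let `r ≥ 0`, and
suppose there exist elements `f 1, …, f r` of `M` whose images `1 ⊗ ρ (f i)` in
`ℚ ⊗_ℤ N` are linearly independent over `A`.  (We encode `ℚ ⊗_ℤ N` as an `A`-module `V`
together with a map `j : N → V` that is a localization of `N` at the nonzero integers and
is compatible with the `𝒜`-actions.)  Then for every `r`-tuple `φ` of elements of `M` and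
every positive integer `n` there exists an `r`-tuple `φ'` of elements of `M` such that
(a) `φ' i − φ i ∈ n • M` for all `i`, and (b) the `𝒜`-submodule of `N` generated by the
`ρ (φ' i)` is a free `𝒜`-module of rank `r`.
-/

noncomputable section

variable (A : Type) [Ring A] [Algebra ℚ A] [FiniteDimensional ℚ A] [IsSemisimpleRing A]
variable (𝒜 : Subalgebra ℤ A) [Module.Finite ℤ ↥𝒜]
variable (M N : Type) [AddCommGroup M] [Module ↥𝒜 M] [Module.Finite ↥𝒜 M]
  [AddCommGroup N] [Module ↥𝒜 N] [Module.Finite ↥𝒜 N]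
variable (ρ : M →ₗ[↥𝒜] N)
-- `V` plays the role of `ℚ ⊗_ℤ N`, via the localization map `j`:
variable (V : Type) [AddCommGroup V] [Module A V]
variable (j : N →ₗ[ℤ] V) [IsLocalizedModule (nonZeroDivisors ℤ) j]

theorem exists_approximation_with_free_span
    (hspan : Submodule.span ℚ (𝒜 : Set A) = ⊤)
    -- compatibility of `j` with the `𝒜`-module structures:
    (hj : ∀ (b : ↥𝒜) (x : N), j (b • x) = (b : A) • j x)
    (r : ℕ) (f : Fin r → M)
    (hLI : LinearIndependent A fun i => j (ρ (f i)))
    (φ : Fin r → M) (n : ℕ) (hn : 0 < n) :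
    ∃ φ' : Fin r → M,
      (∀ i, ∃ m : M, φ' i - φ i = (n : ℤ) • m) ∧
        Nonempty
          (Module.Basis (Fin r) ↥𝒜
            ↥(Submodule.span ↥𝒜 (Set.range fun i => ρ (φ' i)))) := by
  classical
  set x : Fin r → V := fun i => j (ρ (φ i)) with hxdef
  set y : Fin r → V := fun i => j (ρ (f i)) with hydef
  have hy : LinearIndependent A y := hLI
  have hyW : ∀ i, y i ∈ Submodule.span A (Set.range y) :=
    fun i => Submodule.subset_span (Set.mem_range_self i)
  set W := Submodule.span A (Set.range y) with hW
  obtain ⟨q, hq⟩ := exists_isCompl W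
  set π : V →ₗ[A] W := W.linearProjOfIsCompl q hq with hπ
  let b : Module.Basis (Fin r) A W := Module.Basis.span hy
  have hb : ∀ i, (b i : V) = y i := fun i => congrArg Subtype.val (Module.Basis.span_apply hy i)
  let e : W ≃ₗ[A] (Fin r → A) := b.equivFun
  let ξ : (Fin r → A) →ₗ[A] W :=
    { toFun := fun a => ∑ i, a i • π (x i)
      map_add' := by
        intro a a'
        simp [add_smul, Finset.sum_add_distrib]
      map_smul' := by
        intro c a
        simp [mul_smul, Finset.smul_sum] }
  let T : (Fin r → A) →ₗ[A] (Fin r → A) := e.toLinearMap ∘ₗ ξ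
  let S : Module.End ℚ (Fin r → A) := T.restrictScalars ℚ
  have hfin : Set.Finite (setOf S.HasEigenvalue) := S.finite_hasEigenvalue
  have hbadfin : Set.Finite {t : ℤ | S.HasEigenvalue (-((n : ℚ) * (t : ℚ)))} := by
    have : {t : ℤ | S.HasEigenvalue (-((n : ℚ) * (t : ℚ)))}
        = (fun t : ℤ => -((n : ℚ) * (t : ℚ))) ⁻¹' (setOf S.HasEigenvalue) := rfl
    rw [this]
    refine Set.Finite.preimage ?_ hfin
    intro t1 _ t2 _ h
    have hn' : (n : ℚ) ≠ 0 := by exact_mod_cast hn.ne'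
    have := mul_left_cancel₀ hn' (neg_injective h)
    exact_mod_cast this
  obtain ⟨t, ht⟩ := hbadfin.infinite_compl.nonempty
  simp only [Set.mem_compl_iff, Set.mem_setOf_eq] at ht
  set c : ℤ := (n : ℤ) * t with hc
  -- key injectivity
  have hinj : ∀ a : Fin r → A, T a + c • a = 0 → a = 0 := by
    intro a ha
    by_contra hne
    apply ht
    refine Module.End.hasEigenvalue_of_hasEigenvector (x := a) ⟨?_, hne⟩
    rw [Module.End.mem_eigenspace_iff]
    show T a = -((n : ℚ) * (t : ℚ)) • a
    have h1 : T a = (-c : ℤ) • a := by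
      rw [neg_smul, eq_neg_iff_add_eq_zero]; exact ha
    rw [h1, ← Int.cast_smul_eq_zsmul ℚ (-c) a]
    congr 1
    push_cast [hc]
    ring
  -- the perturbed tuple
  set φ' : Fin r → M := fun i => φ i + c • f i with hφ'
  have himg : ∀ i, j (ρ (φ' i)) = x i + c • y i := by
    intro i
    simp only [hφ', map_add, map_zsmul]
    rfl
  -- linear independence over A of the perturbed images
  have hLI' : LinearIndependent A fun i => j (ρ (φ' i)) := by
    rw [Fintype.linearIndependent_iff]
    intro a ha
    have ha' : (∑ i, a i • x i) + c • (∑ i, a i • y i) = 0 := by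
      rw [Finset.smul_sum, ← Finset.sum_add_distrib]
      rw [show (0 : V) = ∑ i, a i • (j (ρ (φ' i))) from ha.symm]
      refine Finset.sum_congr rfl fun i _ => ?_
      rw [himg i, smul_add, smul_comm]
    have hkey : T a + c • a = 0 := by
      have hπy : ∀ i, π (y i) = b i := by
        intro i
        rw [← hb i, hπ]
        exact Submodule.linearProjOfIsCompl_apply_left hq (b i)
      have h2 : π ((∑ i, a i • x i) + c • (∑ i, a i • y i)) = ξ a + c • (e.symm a) := by
        rw [map_add, map_zsmul π c]
        congr 1
        · rw [map_sum]; simp only [map_smul]; rfl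
        · rw [map_sum]
          simp only [map_smul, hπy]
          rw [show e.symm a = ∑ i, a i • b i from Module.Basis.equivFun_symm_apply b a]
      have h3 := congrArg e (h2.symm.trans (by rw [ha', map_zero]))
      rw [map_add, map_zsmul, e.apply_symm_apply, map_zero] at h3
      exact h3
    have := hinj a hkey
    intro i
    rw [this]; rfl
  -- linear independence over 𝒜 in N
  have hLI𝒜 : LinearIndependent ↥𝒜 fun i => ρ (φ' i) := by
    rw [Fintype.linearIndependent_iff]
    intro a ha i
    have hj0 : ∑ k, ((a k : A)) • j (ρ (φ' k)) = 0 := by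
      have := congrArg j ha
      rw [map_sum, map_zero] at this
      rw [← this]
      exact Finset.sum_congr rfl fun k _ => (hj (a k) (ρ (φ' k))).symm
    have := Fintype.linearIndependent_iff.mp hLI' (fun k => (a k : A)) hj0 i
    exact Subtype.ext this
  refine ⟨φ', fun i => ⟨t • f i, ?_⟩, ⟨Module.Basis.span hLI𝒜⟩⟩
  rw [hφ', smul_smul]
  simp
  rfl

end
end
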